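/- Let p2, p1, p0, q2 be real numbers with q2 ≠ 0 and r a nonzero real number. If ω10 > 0 satisfies ω10⁸ + n1*ω10⁶ + n2*ω10⁴ + n3*ω10² + n4 = 0 with n1 = (p2 + q2)² − 2*(p1 + q2*p2), n2 = (p1 + q2*p2)² + 2*q2*p0 − 2*(p0 + p1*q2)*(p2 + q2), n3 = (p0 + p1*q2)² − 2*q2*p0*(p1 + q2*p2), n4 = p0²*q2² − r²*q2², then there exists τ1 ∈ [0, 2π/ω10) such that q2*r*cos(ω10*τ1) = −ω10⁴ + (p1 + q2*p2)*ω10² − q2*p0 and q2*r*sin(ω10*τ1) = −(p2 + q2)*ω10³ + (p0 + p1*q2)*ω10; equivalently, λ = iω10 is a root of (λ + q2)*(λ³ + p2*λ² + p1*λ + p0) + r*q2*e^{−λ*τ1} = 0. -/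

import Mathlib

lemma exists_angle (A B c : ℝ) (hc : c ≠ 0) (hsq : A ^ 2 + B ^ 2 = c ^ 2) :
    ∃ θ : ℝ, 0 ≤ θ ∧ θ < 2 * Real.pi ∧ c * Real.cos θ = A ∧ c * Real.sin θ = B := by
  set z : ℂ := ⟨A / c, B / c⟩ with hz
  have habs : ‖z‖ = 1 := by
    have h2 : (‖z‖) ^ 2 = 1 := by
      rw [Complex.sq_norm, Complex.normSq_mk]
      field_simp
      nlinarith [hsq]
    nlinarith [norm_nonneg z]
  have hz0 : z ≠ 0 := by
    intro h0; rw [h0] at habs; simp at habs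
  have hcos : Real.cos (Complex.arg z) = A / c := by
    rw [Complex.cos_arg hz0, habs]; simp [hz]
  have hsin : Real.sin (Complex.arg z) = B / c := by
    rw [Complex.sin_arg, habs]; simp [hz]
  by_cases hnn : 0 ≤ Complex.arg z
  · refine ⟨Complex.arg z, hnn, ?_, ?_, ?_⟩
    · have := Complex.arg_le_pi z
      nlinarith [Real.pi_pos]
    · rw [hcos]; field_simp
    · rw [hsin]; field_simp
  · push_neg at hnn
    refine ⟨Complex.arg z + 2 * Real.pi, ?_, ?_, ?_, ?_⟩
    · have := Complex.neg_pi_lt_arg z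
      nlinarith [Real.pi_pos]
    · nlinarith
    · rw [Real.cos_add_two_pi, hcos]; field_simp
    · rw [Real.sin_add_two_pi, hsin]; field_simp

/-- Every positive root of the degree-8 polynomial admits a critical delay. -/
theorem stmt_15 (p2 p1 p0 q2 : ℝ) (hq2 : q2 ≠ 0) (r : ℝ) (hr : r ≠ 0)
    (ω10 : ℝ) (hω10 : 0 < ω10)
    (n1 n2 n3 n4 : ℝ)
    (hn1 : n1 = (p2 + q2) ^ 2 - 2 * (p1 + q2 * p2))
    (hn2 : n2 = (p1 + q2 * p2) ^ 2 + 2 * q2 * p0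
        - 2 * (p0 + p1 * q2) * (p2 + q2))
    (hn3 : n3 = (p0 + p1 * q2) ^ 2 - 2 * q2 * p0 * (p1 + q2 * p2))
    (hn4 : n4 = p0 ^ 2 * q2 ^ 2 - r ^ 2 * q2 ^ 2)
    (h : ω10 ^ 8 + n1 * ω10 ^ 6 + n2 * ω10 ^ 4 + n3 * ω10 ^ 2 + n4 = 0) :
    ∃ τ1 : ℝ, 0 ≤ τ1 ∧ τ1 < 2 * Real.pi / ω10 ∧
      q2 * r * Real.cos (ω10 * τ1)
        = -ω10 ^ 4 + (p1 + q2 * p2) * ω10 ^ 2 - q2 * p0 ∧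
      q2 * r * Real.sin (ω10 * τ1)
        = -(p2 + q2) * ω10 ^ 3 + (p0 + p1 * q2) * ω10 ∧
      (Complex.I * ω10 + q2) *
          ((Complex.I * ω10) ^ 3 + p2 * (Complex.I * ω10) ^ 2
            + p1 * (Complex.I * ω10) + p0)
        + r * q2 * Complex.exp (-(Complex.I * ω10) * τ1) = 0 := by
  subst hn1 hn2 hn3 hn4
  have hc : q2 * r ≠ 0 := mul_ne_zero hq2 hr
  have hsq : (-ω10 ^ 4 + (p1 + q2 * p2) * ω10 ^ 2 - q2 * p0) ^ 2
      + (-(p2 + q2) * ω10 ^ 3 + (p0 + p1 * q2) * ω10) ^ 2 = (q2 * r) ^ 2 := by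
    linear_combination h
  obtain ⟨θ, hθ0, hθ2, hcosθ, hsinθ⟩ := exists_angle _ _ (q2 * r) hc hsq
  have hωτ : ω10 * (θ / ω10) = θ := by field_simp
  refine ⟨θ / ω10, div_nonneg hθ0 hω10.le,
    (div_lt_div_iff_of_pos_right hω10).mpr hθ2, ?_, ?_, ?_⟩
  · rw [hωτ]; exact hcosθ
  · rw [hωτ]; exact hsinθ
  · have hne : (ω10 : ℂ) ≠ 0 := by exact_mod_cast hω10.ne'
    have hexp : (-(Complex.I * (ω10:ℂ)) * ((θ / ω10 : ℝ) : ℂ))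
        = ((-θ : ℝ) : ℂ) * Complex.I := by
      push_cast
      field_simp
    rw [hexp, Complex.exp_mul_I, ← Complex.ofReal_cos, ← Complex.ofReal_sin,
      Real.cos_neg, Real.sin_neg]
    have hcC := congrArg (Complex.ofReal) hcosθ
    have hsC := congrArg (Complex.ofReal) hsinθ
    push_cast at hcC hsC ⊢
    linear_combination hcC - Complex.I * hsC
      + (-(ω10:ℂ)^4 + (p2+q2)*Complex.I*ω10^3 + (p1 + q2*p2)*ω10^2) * Complex.I_sq
      + Complex.I^2*(ω10:ℂ)^4 * Complex.I_sq
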